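/- For 2 ≤ k ≤ l, the element w_{k,l} ∈ S_n with reduced word s_k s_{k-1} s_{k+1} s_k s_{k+2} s_{k+1} ⋯ s_l s_{l-1} equals, as a permutation in one-line notation, [1, 2, ..., k−2, k+1, k+2, ..., l+1, k−1, k, l+2, ..., n], and this permutation is 321-avoiding. -/

import Mathlib

open Polynomial

/-- The simple transposition `s_i = (i, i+1)` (1-based) in `S_n`, acting on `Fin n`
(0-based positions `i-1` and `i`); equals `1` if `i` is out of range. -/
def gen (n : ℕ) (i : ℕ) : Equiv.Perm (Fin n) :=
  if h : 1 ≤ i ∧ i < n then Equiv.swap ⟨i - 1, by omega⟩ ⟨i, h.2⟩ else 1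

/-- Product of the word `l` of generator indices. -/
def wordProd (n : ℕ) (l : List ℕ) : Equiv.Perm (Fin n) :=
  (l.map (gen n)).prod

/-- Coxeter length of `w ∈ S_n`. -/
noncomputable def len (n : ℕ) (w : Equiv.Perm (Fin n)) : ℕ :=
  sInf {r | ∃ l : List ℕ, (∀ i ∈ l, 1 ≤ i ∧ i < n) ∧ wordProd n l = w ∧ l.length = r}

/-- `l` is a reduced word for `w`. -/
def IsReducedWord (n : ℕ) (w : Equiv.Perm (Fin n)) (l : List ℕ) : Prop :=
  (∀ i ∈ l, 1 ≤ i ∧ i < n) ∧ wordProd n l = w ∧ l.length = len n w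

/-- Bruhat-Chevalley order: `x ≤ w` iff every reduced word for `w` contains a
subword whose product is `x`. -/
def Bruhat (n : ℕ) (x w : Equiv.Perm (Fin n)) : Prop :=
  ∀ l, IsReducedWord n w l → ∃ t, t.Sublist l ∧ wordProd n t = x

/-- `w` is 321-avoiding: no `i < j < k` with `w i > w j > w k`. -/
def Avoids321 (n : ℕ) (w : Equiv.Perm (Fin n)) : Prop :=
  ¬ ∃ i j k : Fin n, i < j ∧ j < k ∧ w j < w i ∧ w k < w j

/-- Product of the subword of `l` selected by the mask `S` (set of selected positions). -/
def maskProd (n : ℕ) (l : List ℕ) (S : Finset ℕ) : Equiv.Perm (Fin n) :=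
  wordProd n (((List.range l.length).filter (fun j => decide (j ∈ S))).map (fun j => l.getD j 0))

/-- Position `j` of the word `l` is a defect of the mask `S`. -/
noncomputable def IsDefect (n : ℕ) (l : List ℕ) (S : Finset ℕ) (j : ℕ) : Prop :=
  len n (maskProd n (l.take j) S * gen n (l.getD j 0)) < len n (maskProd n (l.take j) S)

/-- The defect set `D(σ)` of the mask `S` on the word `l`. -/
noncomputable def defectSet (n : ℕ) (l : List ℕ) (S : Finset ℕ) : Finset ℕ :=
  (Finset.range l.length).filter (fun j =>
    len n (maskProd n (l.take j) S * gen n (l.getD j 0)) < len n (maskProd n (l.take j) S))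

/-- Deodhar's defect generating polynomial `P_x(a) = Σ_{σ : π(w^σ) = x} q^{|D(σ)|}`. -/
noncomputable def defPoly (n : ℕ) (l : List ℕ) (x : Equiv.Perm (Fin n)) : Polynomial ℤ :=
  ∑ S ∈ (Finset.range l.length).powerset,
    if maskProd n l S = x then (X : Polynomial ℤ) ^ (defectSet n l S).card else 0


/-- The word `s_k s_{k-1} s_{k+1} s_k ⋯ s_l s_{l-1}` for `w_{k,l}`. -/
def wklWord (k l : ℕ) : List ℕ :=
  (List.range (l - k + 1)).flatMap (fun m => [k + m, k + m - 1])

lemma wordProd_append (n : ℕ) (t u : List ℕ) :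
    wordProd n (t ++ u) = wordProd n t * wordProd n u := by
  simp [wordProd]

lemma gen_apply (n i : ℕ) (h1 : 1 ≤ i) (h2 : i < n) (x : Fin n) :
    ((gen n i) x : ℕ) = if (x : ℕ) = i - 1 then i else if (x : ℕ) = i then i - 1 else x := by
  rw [gen, dif_pos ⟨h1, h2⟩, Equiv.swap_apply_def]
  split_ifs <;> simp only [Fin.ext_iff, Fin.val_mk] at * <;> omega

def F (k l i : ℕ) : ℕ :=
  if i + 3 ≤ k then i
  else if i + 2 ≤ l then i + 2
  else if i + 1 = l then k - 2
  else if i = l then k - 1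
  else i

lemma wklWord_base (k : ℕ) : wklWord k k = [k, k - 1] := by
  simp [wklWord, List.range_succ]

lemma wklWord_succ (k l : ℕ) (h : k ≤ l) :
    wklWord k (l + 1) = wklWord k l ++ [l + 1, l] := by
  have h1 : l + 1 - k + 1 = (l - k + 1) + 1 := by omega
  rw [wklWord, h1, List.range_succ, List.flatMap_append, wklWord]
  congr 1
  simp
  omega

lemma oneline (n k : ℕ) (h2 : 2 ≤ k) : ∀ l, k ≤ l → l < n →
    ∀ i : Fin n, ((wordProd n (wklWord k l)) i : ℕ) = F k l (i : ℕ) := by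
  intro l hkl
  induction l, hkl using Nat.le_induction with
  | base =>
    intro hln i
    have hw : wordProd n (wklWord k k) = gen n k * gen n (k - 1) := by
      rw [wklWord_base]; simp [wordProd]
    rw [hw, Equiv.Perm.mul_apply, gen_apply n k (by omega) hln,
        gen_apply n (k - 1) (by omega) (by omega)]
    have hi := i.isLt
    unfold F
    split_ifs <;> omega
  | succ l hkl ih =>
    intro hln i
    rw [wklWord_succ k l hkl, wordProd_append]
    have hw : wordProd n [l + 1, l] = gen n (l + 1) * gen n l := by simp [wordProd]
    rw [hw]
    have happ : (wordProd n (wklWord k l) * (gen n (l + 1) * gen n l)) i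
        = wordProd n (wklWord k l) ((gen n (l + 1)) ((gen n l) i)) := rfl
    rw [happ, ih (by omega) _]
    have hi := i.isLt
    have hz : ((gen n (l + 1)) ((gen n l) i) : ℕ) =
        if (i : ℕ) = l - 1 then l + 1 else if (i : ℕ) = l then l - 1
        else if (i : ℕ) = l + 1 then l else i := by
      rw [gen_apply n (l + 1) (by omega) (by omega), gen_apply n l (by omega) (by omega)]
      split_ifs <;> omega
    rw [hz]
    unfold F
    split_ifs <;> omega

def invSet (n : ℕ) (w : Equiv.Perm (Fin n)) : Finset (Fin n × Fin n) :=
  Finset.univ.filter fun p => p.1 < p.2 ∧ w p.2 < w p.1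

lemma swap_lt {n : ℕ} (a b x y : Fin n) (hab : (b : ℕ) = (a : ℕ) + 1) (hxy : x < y)
    (hne : ¬(x = a ∧ y = b)) : Equiv.swap a b x < Equiv.swap a b y := by
  rw [Equiv.swap_apply_def, Equiv.swap_apply_def]
  split_ifs <;> simp only [Fin.lt_def, Fin.ext_iff, not_and] at * <;> omega

lemma card_invSet_mul_swap_le {n : ℕ} (w : Equiv.Perm (Fin n)) (a b : Fin n)
    (hab : (b : ℕ) = (a : ℕ) + 1) :
    (invSet n (w * Equiv.swap a b)).card ≤ (invSet n w).card + 1 := by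
  set s := Equiv.swap a b with hs
  have key : ∀ p ∈ (invSet n (w * s)).erase (a, b), (s p.1, s p.2) ∈ invSet n w := by
    rintro ⟨x, y⟩ hp
    simp only [invSet, Finset.mem_erase, Finset.mem_filter, Finset.mem_univ, true_and,
      Equiv.Perm.mul_apply, Prod.mk.injEq, not_and, Ne] at hp ⊢
    replace hp : _ ∧ (x < y ∧ w (s y) < w (s x)) := ⟨hp.1, (Finset.mem_filter.mp hp.2).2⟩
    obtain ⟨hne, hxy, hval⟩ := hp
    exact ⟨swap_lt a b x y hab hxy (by tauto), hval⟩
  have hsub : invSet n (w * s) ⊆ insert (a, b) ((invSet n (w * s)).erase (a, b)) := by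
    intro p hp
    by_cases h : p = (a, b) <;> simp [h, hp]
  calc (invSet n (w * s)).card
      ≤ (insert (a, b) ((invSet n (w * s)).erase (a, b))).card := Finset.card_le_card hsub
    _ ≤ ((invSet n (w * s)).erase (a, b)).card + 1 := Finset.card_insert_le _ _
    _ ≤ (invSet n w).card + 1 := by
        refine Nat.add_le_add_right ?_ 1
        refine Finset.card_le_card_of_injOn (fun p => (s p.1, s p.2)) key ?_
        intro p _ q _ h
        simp only [Prod.mk.injEq] at h
        exact Prod.ext (s.injective h.1) (s.injective h.2)

lemma invSet_one (n : ℕ) : invSet n (1 : Equiv.Perm (Fin n)) = ∅ := by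
  ext p
  simp only [invSet, Finset.mem_filter, Finset.mem_univ, true_and, Equiv.Perm.one_apply,
    Finset.notMem_empty, iff_false, not_and, Fin.lt_def]
  omega

lemma invcard_le (n : ℕ) (t : List ℕ) (ht : ∀ i ∈ t, 1 ≤ i ∧ i < n) :
    (invSet n (wordProd n t)).card ≤ t.length := by
  induction t using List.reverseRecOn with
  | nil =>
    have : wordProd n [] = 1 := rfl
    simp [this, invSet_one]
  | append_singleton t a ih =>
    have ha := ht a (by simp)
    have hgen : gen n a = Equiv.swap (⟨a - 1, by omega⟩ : Fin n) ⟨a, ha.2⟩ := by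
      rw [gen, dif_pos ha]
    have hw1 : wordProd n [a] = gen n a := by simp [wordProd]
    rw [wordProd_append, hw1, hgen]
    calc (invSet n (wordProd n t * Equiv.swap ⟨a - 1, by omega⟩ ⟨a, ha.2⟩)).card
        ≤ (invSet n (wordProd n t)).card + 1 :=
          card_invSet_mul_swap_le _ _ _ (by simp; omega)
      _ ≤ t.length + 1 := by
          exact Nat.add_le_add_right (ih (fun i hi => ht i (by simp [hi]))) 1
      _ = (t ++ [a]).length := by simp

lemma inv_char (n k l : ℕ) (h2 : 2 ≤ k) (hkl : k ≤ l) (hln : l < n) (x y : Fin n) :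
    (x < y ∧ (wordProd n (wklWord k l)) y < (wordProd n (wklWord k l)) x) ↔
      (k - 2 ≤ (x : ℕ) ∧ (x : ℕ) ≤ l - 2 ∧ ((y : ℕ) = l - 1 ∨ (y : ℕ) = l)) := by
  have hx := x.isLt
  have hy := y.isLt
  simp only [Fin.lt_def]
  rw [oneline n k h2 l hkl hln x, oneline n k h2 l hkl hln y]
  unfold F
  split_ifs <;> omega

lemma invSet_wkl (n k l : ℕ) (h2 : 2 ≤ k) (hkl : k ≤ l) (hln : l < n) :
    invSet n (wordProd n (wklWord k l)) =
      (Finset.Icc (⟨k - 2, by omega⟩ : Fin n) ⟨l - 2, by omega⟩) ×ˢ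
        ({⟨l - 1, by omega⟩, ⟨l, hln⟩} : Finset (Fin n)) := by
  ext ⟨x, y⟩
  simp only [invSet, Finset.mem_filter, Finset.mem_univ, true_and, Finset.mem_product,
    Finset.mem_Icc, Finset.mem_insert, Finset.mem_singleton, Fin.le_def, Fin.ext_iff]
  exact (inv_char n k l h2 hkl hln x y).trans and_assoc.symm

lemma invcard_wkl (n k l : ℕ) (h2 : 2 ≤ k) (hkl : k ≤ l) (hln : l < n) :
    (invSet n (wordProd n (wklWord k l))).card = 2 * (l - k + 1) := by
  rw [invSet_wkl n k l h2 hkl hln, Finset.card_product, Fin.card_Icc]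
  rw [Finset.card_insert_of_notMem (by simp [Fin.ext_iff]; omega), Finset.card_singleton]
  simp only [Fin.val_mk]
  omega

lemma wklWord_length (k l : ℕ) : (wklWord k l).length = 2 * (l - k + 1) := by
  rw [wklWord, List.length_flatMap]
  have : (List.map (fun a => [k + a, k + a - 1].length) (List.range (l - k + 1)))
      = List.replicate (l - k + 1) 2 := by
    rw [List.eq_replicate_iff]
    simp
  rw [this, List.sum_replicate, smul_eq_mul]
  omega

lemma wklWord_valid (n k l : ℕ) (h2 : 2 ≤ k) (hkl : k ≤ l) (hln : l < n) :
    ∀ i ∈ wklWord k l, 1 ≤ i ∧ i < n := by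
  intro i hi
  simp only [wklWord, List.mem_flatMap, List.mem_range, List.mem_cons, List.mem_singleton,
    List.not_mem_nil, or_false] at hi
  obtain ⟨m, hm, hi⟩ := hi
  rcases hi with h | h <;> omega

/-- for `2 ≤ k ≤ l < n`, the word `s_k s_{k-1} s_{k+1} s_k ⋯ s_l s_{l-1}` is
reduced, its product `w_{k,l}` has one-line notation
`[1, ..., k-2, k+1, ..., l+1, k-1, k, l+2, ..., n]`, and `w_{k,l}` is 321-avoiding. -/
theorem stmt12 (n k l : ℕ) (h2 : 2 ≤ k) (hkl : k ≤ l) (hln : l < n) :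
    IsReducedWord n (wordProd n (wklWord k l)) (wklWord k l) ∧
    (∀ i : Fin n, ((wordProd n (wklWord k l)) i : ℕ) =
      if (i : ℕ) + 3 ≤ k then (i : ℕ)
      else if (i : ℕ) + 2 ≤ l then (i : ℕ) + 2
      else if (i : ℕ) + 1 = l then k - 2
      else if (i : ℕ) = l then k - 1
      else (i : ℕ)) ∧
    Avoids321 n (wordProd n (wklWord k l)) := by
  have hvalid := wklWord_valid n k l h2 hkl hln
  have hlenw := wklWord_length k l
  have hmem : 2 * (l - k + 1) ∈ {r | ∃ t : List ℕ, (∀ i ∈ t, 1 ≤ i ∧ i < n) ∧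
      wordProd n t = wordProd n (wklWord k l) ∧ t.length = r} :=
    ⟨wklWord k l, hvalid, rfl, hlenw⟩
  have hlow : ∀ r ∈ {r | ∃ t : List ℕ, (∀ i ∈ t, 1 ≤ i ∧ i < n) ∧
      wordProd n t = wordProd n (wklWord k l) ∧ t.length = r}, 2 * (l - k + 1) ≤ r := by
    rintro r ⟨t, ht, hprod, rfl⟩
    calc 2 * (l - k + 1) = (invSet n (wordProd n (wklWord k l))).card :=
          (invcard_wkl n k l h2 hkl hln).symm
      _ = (invSet n (wordProd n t)).card := by rw [hprod]
      _ ≤ t.length := invcard_le n t ht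
  have hlen : len n (wordProd n (wklWord k l)) = 2 * (l - k + 1) := by
    unfold len
    exact le_antisymm (Nat.sInf_le hmem) (le_csInf ⟨_, hmem⟩ hlow)
  refine ⟨⟨hvalid, rfl, by rw [hlenw, hlen]⟩, ?_, ?_⟩
  · intro i
    exact oneline n k h2 l hkl hln i
  · rintro ⟨i, j, m, hij, hjm, hji, hmj⟩
    have hc1 := (inv_char n k l h2 hkl hln i j).mp ⟨hij, hji⟩
    have hc2 := (inv_char n k l h2 hkl hln j m).mp ⟨hjm, hmj⟩
    omega
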